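/- Fix t ∈ ℂ. Let F ∈ ℂ[z,ξ] satisfy F(8ξ⁻³ + 2tξ⁻¹ − z, ξ) = F(z,ξ) for all z ∈ ℂ and all ξ ≠ 0, and suppose F(0,ξ) = 0 for all ξ ∈ ℂ (i.e., F is divisible by z). Then F is divisible in ℂ[z,ξ] by E(z,ξ) = z(ξ³z − 2tξ² − 8), and the quotient F/E again satisfies (F/E)(8ξ⁻³ + 2tξ⁻¹ − z, ξ) = (F/E)(z,ξ) for all z ∈ ℂ and all ξ ≠ 0. -/

import Mathlib

set_option maxHeartbeats 1000000
set_option synthInstance.maxHeartbeats 400000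

open MvPolynomial

private lemma eval_matrix_two (p : MvPolynomial (Fin 2) ℂ) (z ξ : ℂ) :
    eval ![z, ξ] p =
      Polynomial.eval z (Polynomial.map (eval ![ξ]) (finSuccEquiv ℂ 1 p)) := by
  have h : (![z, ξ] : Fin 2 → ℂ) = Fin.cons z ![ξ] := rfl
  rw [h, eval_eq_eval_mv_eval']

private lemma poly_eval_aeval (p : MvPolynomial (Fin 2) ℂ) (g : Fin 2 → Polynomial ℂ) (z : ℂ) :
    Polynomial.eval z (aeval g p) = eval (fun i => Polynomial.eval z (g i)) p := by
  induction p using MvPolynomial.induction_on with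
  | C a => simp
  | add p q hp hq => simp [hp, hq]
  | mul_X p i hp => simp [hp]

private lemma eval_eta (p : MvPolynomial (Fin 2) ℂ) (x : Fin 2 → ℂ) :
    eval x p = eval ![x 0, x 1] p := by
  have : x = ![x 0, x 1] := by funext i; fin_cases i <;> simp
  rw [← this]

private lemma eq_zero_of_eval_off_axis (p : MvPolynomial (Fin 2) ℂ)
    (h : ∀ z ξ : ℂ, ξ ≠ 0 → eval ![z, ξ] p = 0) : p = 0 := by
  have key : ∀ z ξ : ℂ, eval ![z, ξ] p = 0 := by
    intro z ξ
    have hq : (aeval ![Polynomial.C z, Polynomial.X] p : Polynomial ℂ) = 0 := by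
      apply Polynomial.eq_zero_of_infinite_isRoot
      apply Set.Infinite.mono (s := ({0}ᶜ : Set ℂ))
      · intro x hx
        simp only [Set.mem_compl_iff, Set.mem_singleton_iff] at hx
        have hx0 := h z x hx
        simp only [Set.mem_setOf_eq, Polynomial.IsRoot]
        rw [poly_eval_aeval]
        rw [eval_eta]
        simpa using hx0
      · exact (Set.finite_singleton (0 : ℂ)).infinite_compl
    have h2 := congrArg (Polynomial.eval ξ) hq
    rw [poly_eval_aeval] at h2
    rw [eval_eta] at h2
    simpa using h2
  apply MvPolynomial.funext (q := 0)
  intro x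
  rw [eval_eta]
  simpa using key (x 0) (x 1)

private lemma bezout_ab (t : ℂ) :
    (C (t^2/16) * X 0) * ((X 0 : MvPolynomial (Fin 1) ℂ)^3)
      + (C (1/8) - C (t/32) * (X 0)^2) * (C (2*t) * (X 0)^2 + 8) = 1 := by
  apply MvPolynomial.funext
  intro x
  simp only [map_add, map_mul, map_sub, map_pow, map_one, eval_C, eval_X, map_ofNat]
  ring

private lemma finSuccEquiv_dM (t : ℂ) :
    (finSuccEquiv ℂ 1) ((X 1)^3 * X 0 - C (2*t) * (X 1)^2 - 8 : MvPolynomial (Fin 2) ℂ)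
      = Polynomial.C ((X 0 : MvPolynomial (Fin 1) ℂ)^3) * Polynomial.X
        - Polynomial.C (C (2*t) * (X 0 : MvPolynomial (Fin 1) ℂ)^2 + 8) := by
  have h1 : (X 1 : MvPolynomial (Fin 2) ℂ) = X (Fin.succ 0) := rfl
  have hC : ∀ c : ℂ, (finSuccEquiv ℂ 1) (C c : MvPolynomial (Fin 2) ℂ)
      = Polynomial.C (C c) := by
    intro c
    rw [← MvPolynomial.algebraMap_eq, AlgEquiv.commutes]
    simp [algebraMap_eq]
  simp only [map_sub, map_mul, map_pow, h1, finSuccEquiv_X_zero, finSuccEquiv_X_succ, hC,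
    map_ofNat, map_add]
  ring

private lemma prime_dM (t : ℂ) :
    Prime ((X 1)^3 * X 0 - C (2*t) * (X 1)^2 - 8 : MvPolynomial (Fin 2) ℂ) := by
  set a : MvPolynomial (Fin 1) ℂ := (X 0)^3 with ha
  set b : MvPolynomial (Fin 1) ℂ := C (2*t) * (X 0)^2 + 8 with hb
  set d : Polynomial (MvPolynomial (Fin 1) ℂ) :=
    Polynomial.C a * Polynomial.X - Polynomial.C b with hd
  have ha0 : a ≠ 0 := pow_ne_zero _ (MvPolynomial.X_ne_zero 0)
  have hprim : d.IsPrimitive := by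
    intro r hr
    have h1 : r ∣ d.coeff 1 := (Polynomial.C_dvd_iff_dvd_coeff r d).mp hr 1
    have h0 : r ∣ d.coeff 0 := (Polynomial.C_dvd_iff_dvd_coeff r d).mp hr 0
    have hc1 : d.coeff 1 = a := by simp [hd]
    have hc0 : d.coeff 0 = -b := by simp [hd]
    rw [hc1] at h1; rw [hc0] at h0
    have hbd : r ∣ b := (dvd_neg).mp h0
    have : r ∣ 1 := by
      have hB := bezout_ab t
      rw [← ha, ← hb] at hB
      rw [← hB]
      exact dvd_add (dvd_mul_of_dvd_right h1 _) (dvd_mul_of_dvd_right hbd _)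
    exact isUnit_of_dvd_one this
  let K : Type := FractionRing (MvPolynomial (Fin 1) ℂ)
  letI : Field K := inferInstanceAs (Field (FractionRing (MvPolynomial (Fin 1) ℂ)))
  let φ : MvPolynomial (Fin 1) ℂ →+* K := algebraMap (MvPolynomial (Fin 1) ℂ) K
  have hφinj : Function.Injective φ := IsFractionRing.injective _ _
  have ha0K : φ a ≠ 0 := fun h => ha0 (hφinj (by simpa using h))
  have hmap : d.map φ = Polynomial.C (φ a) * (Polynomial.X - Polynomial.C (φ b / φ a)) := by
    rw [hd]
    push_cast [Polynomial.map_sub, Polynomial.map_mul, Polynomial.map_C, Polynomial.map_X]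
    have hket : φ a * (φ b / φ a) = φ b := by field_simp
    simp only [mul_sub, ← Polynomial.C_mul, hket]
  have hirrK : Irreducible (d.map φ) := by
    rw [hmap]
    have hu : IsUnit (Polynomial.C (φ a)) :=
      Polynomial.isUnit_C.mpr (isUnit_iff_ne_zero.mpr ha0K)
    have hXr : Irreducible (Polynomial.X - Polynomial.C (φ b / φ a)) :=
      Polynomial.irreducible_X_sub_C _
    exact (irreducible_isUnit_mul hu).mpr hXr
  have hirr : Irreducible d :=
    hprim.irreducible_of_irreducible_map_of_injective hφinj hirrK
  have hprime : Prime d := (UniqueFactorizationMonoid.irreducible_iff_prime).mp hirr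
  have himg := finSuccEquiv_dM t
  rw [← ha, ← hb, ← hd] at himg
  rw [← MulEquiv.prime_iff (finSuccEquiv ℂ 1).toRingEquiv.toMulEquiv]
  show Prime ((finSuccEquiv ℂ 1) _)
  rw [himg]
  exact hprime

theorem tau_invariant_divisible_by_E (t : ℂ) (F : MvPolynomial (Fin 2) ℂ)
    (hinv : ∀ z ξ : ℂ, ξ ≠ 0 →
      eval ![8/ξ^3 + 2*t/ξ - z, ξ] F = eval ![z, ξ] F)
    (hzero : ∀ ξ : ℂ, eval ![0, ξ] F = 0) :
    ∃ Q : MvPolynomial (Fin 2) ℂ,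
      F = (X 0 * ((X 1)^3 * X 0 - C (2*t) * (X 1)^2 - 8)) * Q ∧
      ∀ z ξ : ℂ, ξ ≠ 0 →
        eval ![8/ξ^3 + 2*t/ξ - z, ξ] Q = eval ![z, ξ] Q := by
  classical
  set e := MvPolynomial.finSuccEquiv ℂ 1 with he
  set F' := e F with hF'
  set N := F'.natDegree with hN
  have hcoeff : ∀ z ξ : ℂ, eval ![z, ξ] F
      = ∑ k ∈ Finset.range (N+1), eval ![ξ] (F'.coeff k) * z^k := by
    intro z ξ
    rw [eval_matrix_two, Polynomial.eval_eq_sum_range'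
      (lt_of_le_of_lt Polynomial.natDegree_map_le (Nat.lt_succ_self N))]
    exact Finset.sum_congr rfl fun k _ => by rw [Polynomial.coeff_map]
  have c0 : F'.coeff 0 = 0 := by
    apply MvPolynomial.funext (q := 0)
    intro x
    have hx : x = ![x 0] := by funext i; fin_cases i; simp
    rw [hx, map_zero]
    have h := hzero (x 0)
    rw [eval_matrix_two, ← Polynomial.coeff_zero_eq_eval_zero, Polynomial.coeff_map] at h
    exact h
  have hXF' : Polynomial.X ∣ F' := Polynomial.X_dvd_iff.mpr c0
  obtain ⟨G', hG'⟩ := hXF'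
  have hFfac : F = X 0 * e.symm G' := by
    have h2 : e (X 0 * e.symm G') = e F := by
      rw [map_mul, AlgEquiv.apply_symm_apply, he, finSuccEquiv_X_zero, ← he, ← hF', hG']
    exact (e.injective h2).symm
  -- the key divisor
  have hrn : ∀ (c : MvPolynomial (Fin 1) ℂ) (z ξ : ℂ),
      eval ![z, ξ] (rename Fin.succ c) = eval ![ξ] c := by
    intro c z ξ
    rw [eval_rename]
    have hfun : (![z, ξ] ∘ Fin.succ : Fin 1 → ℂ) = ![ξ] := by
      funext i; fin_cases i; simp
    rw [hfun]
  have claimA :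
      (∑ k ∈ Finset.range (N+1), rename Fin.succ (F'.coeff k)
        * ((C (2*t) * (X 1)^2 + 8) - (X 1)^3 * X 0)^k * ((X 1)^3)^(N - k))
      = ((X 1)^3)^N * F := by
    rw [← sub_eq_zero]
    apply eq_zero_of_eval_off_axis
    intro z ξ hξ
    rw [map_sub, sub_eq_zero]
    have hα : ξ^3 ≠ 0 := pow_ne_zero _ hξ
    set w : ℂ := 8/ξ^3 + 2*t/ξ - z with hwdef
    have hβ : 2*t*ξ^2 + 8 - ξ^3*z = ξ^3 * w := by
      rw [hwdef]; field_simp; ring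
    have e1 : eval ![z, ξ] (∑ k ∈ Finset.range (N+1), rename Fin.succ (F'.coeff k)
        * ((C (2*t) * (X 1)^2 + 8) - (X 1)^3 * X 0)^k * ((X 1)^3)^(N - k))
        = (ξ^3)^N * eval ![w, ξ] F := by
      rw [hcoeff w ξ, Finset.mul_sum, map_sum]
      refine Finset.sum_congr rfl fun k hk => ?_
      have hkN : k ≤ N := Nat.lt_succ_iff.mp (Finset.mem_range.mp hk)
      simp only [map_mul, map_pow, map_sub, map_add, hrn, eval_X, eval_C, map_ofNat,
        Matrix.cons_val_one, Matrix.head_cons, Matrix.cons_val_zero]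
      rw [hβ, mul_pow]
      calc eval ![ξ] (F'.coeff k) * ((ξ^3)^k * w^k) * (ξ^3)^(N-k)
          = ((ξ^3)^k * (ξ^3)^(N-k)) * (eval ![ξ] (F'.coeff k) * w^k) := by ring
        _ = (ξ^3)^N * (eval ![ξ] (F'.coeff k) * w^k) := by
            rw [← pow_add, Nat.add_sub_cancel' hkN]
    rw [e1, hinv z ξ hξ]
    simp only [map_mul, map_pow, eval_X, Matrix.cons_val_one, Matrix.head_cons, Matrix.cons_val_zero]
  have claimB :
      ((X 1)^3 * X 0 - C (2*t) * (X 1)^2 - 8 : MvPolynomial (Fin 2) ℂ)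
      ∣ ∑ k ∈ Finset.range (N+1), rename Fin.succ (F'.coeff k)
        * ((C (2*t) * (X 1)^2 + 8) - (X 1)^3 * X 0)^k * ((X 1)^3)^(N - k) := by
    apply Finset.dvd_sum
    intro k _
    rcases Nat.eq_zero_or_pos k with hk0 | hkpos
    · subst hk0
      rw [c0, map_zero, zero_mul, zero_mul]
      exact dvd_zero _
    · apply dvd_mul_of_dvd_left
      apply dvd_mul_of_dvd_right
      have hneg : (C (2*t) * (X 1)^2 + 8) - (X 1)^3 * X 0
          = -((X 1)^3 * X 0 - C (2*t) * (X 1)^2 - 8 : MvPolynomial (Fin 2) ℂ) := by ring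
      rw [hneg]
      exact dvd_pow (dvd_neg.mpr dvd_rfl) hkpos.ne'
  have hprime := prime_dM t
  -- a point where dM vanishes but neither coordinate does
  obtain ⟨z₀, ξ₀, hξ₀, hz₀, hdM0⟩ :
      ∃ z₀ ξ₀ : ℂ, ξ₀ ≠ 0 ∧ z₀ ≠ 0 ∧
        eval ![z₀, ξ₀] ((X 1)^3 * X 0 - C (2*t) * (X 1)^2 - 8 : MvPolynomial (Fin 2) ℂ) = 0 := by
    by_cases h : 2*t + 8 = 0
    · refine ⟨-3, 2, by norm_num, by norm_num, ?_⟩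
      have ht : t = -4 := by linear_combination h / 2
      simp only [map_sub, map_mul, map_pow, eval_X, eval_C, map_ofNat,
        Matrix.cons_val_one, Matrix.head_cons, Matrix.cons_val_zero, ht]
      norm_num
    · refine ⟨2*t + 8, 1, one_ne_zero, h, ?_⟩
      simp only [map_sub, map_mul, map_pow, eval_X, eval_C, map_ofNat,
        Matrix.cons_val_one, Matrix.head_cons, Matrix.cons_val_zero]
      ring
  have hnd0 : ¬ ((X 1)^3 * X 0 - C (2*t) * (X 1)^2 - 8 : MvPolynomial (Fin 2) ℂ) ∣ X 0 := by
    rintro ⟨q, hq⟩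
    apply hz₀
    have h2 := congrArg (eval ![z₀, ξ₀]) hq
    rw [map_mul, hdM0, zero_mul] at h2
    simpa using h2
  have hnd1 : ¬ ((X 1)^3 * X 0 - C (2*t) * (X 1)^2 - 8 : MvPolynomial (Fin 2) ℂ) ∣ X 1 := by
    rintro ⟨q, hq⟩
    apply hξ₀
    have h2 := congrArg (eval ![z₀, ξ₀]) hq
    rw [map_mul, hdM0, zero_mul] at h2
    simpa using h2
  have hdF : ((X 1)^3 * X 0 - C (2*t) * (X 1)^2 - 8 : MvPolynomial (Fin 2) ℂ) ∣ F := by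
    have hdvd := claimA ▸ claimB
    rcases hprime.2.2 _ _ hdvd with h | h
    · exfalso
      apply hnd1
      apply hprime.dvd_of_dvd_pow (n := 3*N)
      rwa [pow_mul]
    · exact h
  have hdG : ((X 1)^3 * X 0 - C (2*t) * (X 1)^2 - 8 : MvPolynomial (Fin 2) ℂ) ∣ e.symm G' := by
    rcases hprime.2.2 _ _ (hFfac ▸ hdF) with h | h
    · exact absurd h hnd0
    · exact h
  obtain ⟨Q, hQ⟩ := hdG
  refine ⟨Q, by rw [hFfac, hQ]; ring, ?_⟩
  -- invariance of the quotient
  intro z ξ hξ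
  have hα : ξ^3 ≠ 0 := pow_ne_zero _ hξ
  have hFy : ∀ u : ℂ, eval ![u, ξ] F
      = (u * (ξ^3*u - 2*t*ξ^2 - 8)) * eval ![u, ξ] Q := by
    intro u
    rw [hFfac, hQ]
    simp only [map_mul, map_sub, map_pow, eval_X, eval_C, map_ofNat,
      Matrix.cons_val_one, Matrix.head_cons, Matrix.cons_val_zero]
    ring
  have hEQ : ∀ y : ℂ, y ≠ 0 → ξ^3*y - 2*t*ξ^2 - 8 ≠ 0 →
      eval ![8/ξ^3 + 2*t/ξ - y, ξ] Q = eval ![y, ξ] Q := by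
    intro y hy hEy
    have h1 := hinv y ξ hξ
    have hEw : (8/ξ^3 + 2*t/ξ - y) * (ξ^3*(8/ξ^3 + 2*t/ξ - y) - 2*t*ξ^2 - 8)
        = y * (ξ^3*y - 2*t*ξ^2 - 8) := by
      field_simp; ring
    rw [hFy (8/ξ^3 + 2*t/ξ - y), hFy y, hEw] at h1
    exact mul_left_cancel₀ (mul_ne_zero hy hEy) h1
  set c : ℂ := 8/ξ^3 + 2*t/ξ with hc
  have hev1 : ∀ y : ℂ, Polynomial.eval y
      (aeval ![Polynomial.C c - Polynomial.X, Polynomial.C ξ] Q : Polynomial ℂ)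
      = eval ![c - y, ξ] Q := by
    intro y
    rw [poly_eval_aeval, eval_eta]
    simp
  have hev2 : ∀ y : ℂ, Polynomial.eval y
      (aeval ![Polynomial.X, Polynomial.C ξ] Q : Polynomial ℂ)
      = eval ![y, ξ] Q := by
    intro y
    rw [poly_eval_aeval, eval_eta]
    simp
  have hq12 : (aeval ![Polynomial.C c - Polynomial.X, Polynomial.C ξ] Q : Polynomial ℂ)
      = aeval ![Polynomial.X, Polynomial.C ξ] Q := by
    apply Polynomial.eq_of_infinite_eval_eq
    apply Set.Infinite.mono (s := (({0, (2*t*ξ^2+8)/ξ^3} : Set ℂ)ᶜ))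
    · intro y hy
      simp only [Set.mem_compl_iff, Set.mem_insert_iff, Set.mem_singleton_iff, not_or] at hy
      obtain ⟨hy0, hyv⟩ := hy
      have hEy : ξ^3*y - 2*t*ξ^2 - 8 ≠ 0 := by
        intro hcon
        apply hyv
        rw [eq_div_iff hα]
        linear_combination hcon
      have hres := hEQ y hy0 hEy
      simp only [Set.mem_setOf_eq]
      rw [hev1 y, hev2 y]
      rw [hc]
      exact hres
    · exact ((Set.finite_singleton _).insert _).infinite_compl
  have hfin := congrArg (Polynomial.eval z) hq12
  rw [hev1 z, hev2 z] at hfin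
  rw [hc] at hfin
  exact hfin
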